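/- Assume g is unimodular, i.e. μ + Tr D = 0. Then J is harmonic if and only if (i) μγ + D_sγ − J'D_aJ'ρ = 0 and (ii) D_aJ'D_aJ' = J'D_aJ'D_a. -/

import Mathlib

open scoped BigOperators
open Matrix

noncomputable section

/-- The underlying `2n`-dimensional real vector space `ℝ^{2n}`, whose standard basis
plays the role of the orthonormal basis `e₀, e₁, …, e_{2n-1}`. -/
abbrev G (n : ℕ) := Fin (2*n) → ℝ

/-- The inner product `⟨·,·⟩` making the standard basis orthonormal. -/
def inn {n : ℕ} (x y : G n) : ℝ := ∑ i, x i * y i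

/-- The standard basis vector `e k` (indexed by a natural number `k`). -/
def E (n : ℕ) (k : ℕ) : G n := fun i => if (i : ℕ) = k then 1 else 0

/-- Membership in `a = span{e₂, …, e_{2n-1}}`. -/
def inA {n : ℕ} (x : G n) : Prop := ∀ i : Fin (2*n), (i : ℕ) < 2 → x i = 0

/-- The orthogonal almost complex structure `J e_{2i} = e_{2i+1}`, `J e_{2i+1} = -e_{2i}`. -/
def Jm (n : ℕ) : Matrix (Fin (2*n)) (Fin (2*n)) ℝ :=
  Matrix.of fun k l =>
    if (k : ℕ) = (l : ℕ) + 1 ∧ Even (l : ℕ) then (1 : ℝ)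
    else if (l : ℕ) = (k : ℕ) + 1 ∧ Even (k : ℕ) then -1 else 0

/-- `D` is (the extension by zero of) an endomorphism of `a`: it vanishes on
`span{e₀, e₁}` and takes values orthogonal to `span{e₀, e₁}`. -/
def DinA {n : ℕ} (D : Matrix (Fin (2*n)) (Fin (2*n)) ℝ) : Prop :=
  ∀ k l : Fin (2*n), ((k : ℕ) < 2 ∨ (l : ℕ) < 2) → D k l = 0

/-- The matrix of `L` determined by the data `μ, v₀, w₀, D`, i.e.
`L e₀ = 0`, `L e₁ = μ e₁ + v₀` and `L x = ⟨w₀, x⟩ e₁ + D x` for `x ∈ a`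
(for `v₀, w₀ ∈ a` and `D` an endomorphism of `a`). -/
def Lm {n : ℕ} (μ : ℝ) (v₀ w₀ : G n) (D : Matrix (Fin (2*n)) (Fin (2*n)) ℝ) :
    Matrix (Fin (2*n)) (Fin (2*n)) ℝ :=
  Matrix.of fun k l =>
    (if (k : ℕ) = 1 ∧ (l : ℕ) = 1 then μ else 0)
      + (if (l : ℕ) = 1 then v₀ k else 0)
      + (if (k : ℕ) = 1 then w₀ l else 0)
      + D k l

/-- The Lie bracket of the almost abelian Lie algebra `g = ℝ e₀ ⋉_L u`:
`[e₀, u] = L u` for `u ∈ u = span{e₁, …, e_{2n-1}}` and `[u, v] = 0` for `u, v ∈ u`. -/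
def br {n : ℕ} (L : Matrix (Fin (2*n)) (Fin (2*n)) ℝ) (x y : G n) : G n :=
  inn x (E n 0) • L.mulVec y - inn y (E n 0) • L.mulVec x

/-- `nabla` is the Levi-Civita connection of `⟨·,·⟩`, i.e. it satisfies the Koszul
formula `2⟨∇_x y, z⟩ = ⟨[x,y],z⟩ − ⟨[y,z],x⟩ + ⟨[z,x],y⟩`. -/
def Koszul {n : ℕ} (L : Matrix (Fin (2*n)) (Fin (2*n)) ℝ) (nabla : G n → G n → G n) : Prop :=
  ∀ x y z : G n, 2 * inn (nabla x y) z
    = inn (br L x y) z - inn (br L y z) x + inn (br L z x) y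

/-- `(∇_y J)(x) = ∇_y (Jx) − J ∇_y x`. -/
def covJ {n : ℕ} (nabla : G n → G n → G n) (y x : G n) : G n :=
  nabla y ((Jm n).mulVec x) - (Jm n).mulVec (nabla y x)

/-- The rough Laplacian
`(∇*∇J)(x) = Σ_i ((∇_{e_i}(∇_{e_i}J))(x) − (∇_{∇_{e_i}e_i} J)(x))`. -/
def roughLap {n : ℕ} (nabla : G n → G n → G n) (x : G n) : G n :=
  ∑ i : Fin (2*n),
    (nabla (E n i.val) (covJ nabla (E n i.val) x)
      - covJ nabla (E n i.val) (nabla (E n i.val) x)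
      - covJ nabla (nabla (E n i.val) (E n i.val)) x)

/-- `J` is harmonic: `J ∘ (∇*∇J) = (∇*∇J) ∘ J`. -/
def Harmonic {n : ℕ} (nabla : G n → G n → G n) : Prop :=
  ∀ x : G n, (Jm n).mulVec (roughLap nabla x) = roughLap nabla ((Jm n).mulVec x)

/-- Symmetric part of a matrix. -/
def symPart {n : ℕ} (M : Matrix (Fin (2*n)) (Fin (2*n)) ℝ) :
    Matrix (Fin (2*n)) (Fin (2*n)) ℝ := (1/2 : ℝ) • (M + Mᵀ)

/-- Skew-symmetric part of a matrix. -/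
def skewPart {n : ℕ} (M : Matrix (Fin (2*n)) (Fin (2*n)) ℝ) :
    Matrix (Fin (2*n)) (Fin (2*n)) ℝ := (1/2 : ℝ) • (M - Mᵀ)

/-- `γ = (v₀ + w₀)/2`. -/
def gam {n : ℕ} (v₀ w₀ : G n) : G n := (1/2 : ℝ) • (v₀ + w₀)

/-- `ρ = (v₀ − w₀)/2`. -/
def rho {n : ℕ} (v₀ w₀ : G n) : G n := (1/2 : ℝ) • (v₀ - w₀)

/-- The fundamental 2-form `ω(x,y) = ⟨Jx, y⟩`. -/
def om {n : ℕ} (x y : G n) : ℝ := inn ((Jm n).mulVec x) y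

/-- `(∇_x ω)(y,z) = −ω(∇_x y, z) − ω(y, ∇_x z)`. -/
def nablaOm {n : ℕ} (nabla : G n → G n → G n) (x y z : G n) : ℝ :=
  - om (nabla x y) z - om y (nabla x z)

/-- `dω(x,y,z) = −ω([x,y],z) − ω([y,z],x) − ω([z,x],y)`. -/
def dOm {n : ℕ} (L : Matrix (Fin (2*n)) (Fin (2*n)) ℝ) (x y z : G n) : ℝ :=
  - om (br L x y) z - om (br L y z) x - om (br L z x) y

/-- The codifferential `δω(x) = −Σ_i (∇_{e_i}ω)(e_i, x)`. -/
def deltaOm {n : ℕ} (nabla : G n → G n → G n) (x : G n) : ℝ :=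
  - ∑ i : Fin (2*n), nablaOm nabla (E n i.val) (E n i.val) x

/-- The Nijenhuis tensor `N(x,y) = [x,y] + J([Jx,y] + [x,Jy]) − [Jx,Jy]`. -/
def Nij {n : ℕ} (L : Matrix (Fin (2*n)) (Fin (2*n)) ℝ) (x y : G n) : G n :=
  br L x y
    + (Jm n).mulVec (br L ((Jm n).mulVec x) y + br L x ((Jm n).mulVec y))
    - br L ((Jm n).mulVec x) ((Jm n).mulVec y)

/-- `T⁻(x,y,z) = (∇_x ω)(y,z) − (∇_{Jx} ω)(Jy,z)`. -/
def Tminus {n : ℕ} (nabla : G n → G n → G n) (x y z : G n) : ℝ :=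
  nablaOm nabla x y z - nablaOm nabla ((Jm n).mulVec x) ((Jm n).mulVec y) z

/-- `T⁺(x,y,z) = (∇_x ω)(y,z) + (∇_{Jx} ω)(Jy,z)`. -/
def Tplus {n : ℕ} (nabla : G n → G n → G n) (x y z : G n) : ℝ :=
  nablaOm nabla x y z + nablaOm nabla ((Jm n).mulVec x) ((Jm n).mulVec y) z

/-- `U(x,y,z) = ⟨x,y⟩δω(z) − ⟨x,z⟩δω(y) − ⟨x,Jy⟩δω(Jz) + ⟨x,Jz⟩δω(Jy)`. -/
def Uten {n : ℕ} (nabla : G n → G n → G n) (x y z : G n) : ℝ :=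
  inn x y * deltaOm nabla z - inn x z * deltaOm nabla y
    - inn x ((Jm n).mulVec y) * deltaOm nabla ((Jm n).mulVec z)
    + inn x ((Jm n).mulVec z) * deltaOm nabla ((Jm n).mulVec y)

/-- The Lee form `θ(x) = −(1/(n−1)) δω(Jx)`. -/
def Lee {n : ℕ} (nabla : G n → G n → G n) (x : G n) : ℝ :=
  -(1/((n : ℝ) - 1)) * deltaOm nabla ((Jm n).mulVec x)

/-- The identity of `a`, extended by zero to `g`. -/
def Ia (n : ℕ) : Matrix (Fin (2*n)) (Fin (2*n)) ℝ :=
  Matrix.of fun k l => if k = l ∧ 2 ≤ (k : ℕ) then (1 : ℝ) else 0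


-- batch 1
lemma innDot {n : ℕ} (x y : G n) : inn x y = x ⬝ᵥ y := rfl

lemma Esingle {n : ℕ} (i : Fin (2*n)) : E n (i : ℕ) = Pi.single i 1 := by
  funext j
  simp only [E, Pi.single_apply]
  by_cases h : j = i
  · simp [h]
  · rw [if_neg (by simpa [Fin.ext_iff] using h), if_neg h]

lemma dotE {n : ℕ} (x : G n) (i : Fin (2*n)) : x ⬝ᵥ E n (i : ℕ) = x i := by
  rw [Esingle, dotProduct_single, mul_one]

lemma Edot {n : ℕ} (x : G n) (i : Fin (2*n)) : E n (i : ℕ) ⬝ᵥ x = x i := by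
  rw [Esingle, single_dotProduct, one_mul]

lemma mulVecE {n : ℕ} (M : Matrix (Fin (2*n)) (Fin (2*n)) ℝ) (i : Fin (2*n)) (k : Fin (2*n)) :
    (M *ᵥ E n (i : ℕ)) k = M k i := by
  rw [Esingle, mulVec_single]; exact mul_one _

-- batch 2 : J
def flipI {n : ℕ} (k : Fin (2*n)) : Fin (2*n) :=
  ⟨if (k : ℕ) % 2 = 0 then (k : ℕ) + 1 else (k : ℕ) - 1, by
    have := k.isLt; split <;> omega⟩

lemma Jm_apply {n : ℕ} (k l : Fin (2*n)) :
    Jm n k l = if l = flipI k then (if (k : ℕ) % 2 = 0 then -1 else 1) else 0 := by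
  simp only [Jm, Matrix.of_apply, flipI, Fin.ext_iff, Nat.even_iff]
  have := k.isLt; have := l.isLt
  split_ifs <;> first | rfl | omega

lemma Jmul {n : ℕ} (x : G n) (k : Fin (2*n)) :
    (Jm n *ᵥ x) k = if (k : ℕ) % 2 = 0 then -x (flipI k) else x (flipI k) := by
  have : (Jm n *ᵥ x) k = ∑ l, (if l = flipI k then (if (k : ℕ) % 2 = 0 then -1 else 1) else 0) * x l := by
    simp only [mulVec, dotProduct, Jm_apply]
  rw [this]
  simp only [ite_mul, zero_mul, mul_ite]
  rw [Finset.sum_ite_eq' Finset.univ (flipI k) (fun l => if (k : ℕ) % 2 = 0 then -1 * x l else 1 * x l)]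
  simp only [Finset.mem_univ, if_true]
  split_ifs <;> ring

lemma flipI_val {n : ℕ} (k : Fin (2*n)) :
    ((flipI k : Fin (2*n)) : ℕ) = if (k : ℕ) % 2 = 0 then (k : ℕ) + 1 else (k : ℕ) - 1 := rfl

lemma flipI_flipI {n : ℕ} (k : Fin (2*n)) : flipI (flipI k) = k := by
  apply Fin.ext
  rw [flipI_val, flipI_val]
  have := k.isLt
  split_ifs <;> omega

lemma flip_par {n : ℕ} (k : Fin (2*n)) : ((flipI k : Fin (2*n)) : ℕ) % 2 = 1 - (k : ℕ) % 2 := by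
  rw [flipI_val]; split_ifs <;> omega

lemma JJ {n : ℕ} (x : G n) : Jm n *ᵥ (Jm n *ᵥ x) = -x := by
  funext k
  rw [Jmul]
  have hp := flip_par k
  by_cases h : (k : ℕ) % 2 = 0 <;>
    simp only [h, if_true, if_false, Jmul, flip_par, flipI_flipI] <;> simp [h, hp] <;> omega

lemma flip_bij {n : ℕ} : Function.Bijective (flipI (n := n)) :=
  Function.Involutive.bijective flipI_flipI

lemma Jskew {n : ℕ} (x y : G n) : (Jm n *ᵥ x) ⬝ᵥ y = -(x ⬝ᵥ (Jm n *ᵥ y)) := by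
  rw [dotProduct, dotProduct, ← Function.Bijective.sum_comp flip_bij (fun k => (Jm n *ᵥ x) k * y k),
    ← Finset.sum_neg_distrib]
  refine Finset.sum_congr rfl (fun k _ => ?_)
  rw [Jmul, Jmul, flipI_flipI, flip_par]
  by_cases h : (k : ℕ) % 2 = 0
  · rw [if_neg (by omega), if_pos h]; ring
  · rw [if_pos (by omega), if_neg h]; ring

lemma JP {n : ℕ} : Jm n *ᵥ E n 0 = E n 1 := by
  funext k
  rw [Jmul]
  simp only [E, flipI_val]
  have := k.isLt
  split_ifs <;> first | (exfalso; omega) | exact ‹False›.elim | ring1 | omega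

lemma Jq {n : ℕ} : Jm n *ᵥ E n 1 = -(E n 0) := by
  funext k
  rw [Jmul]
  simp only [E, flipI_val, Pi.neg_apply]
  have := k.isLt
  split_ifs <;> first | (exfalso; omega) | exact ‹False›.elim | ring1 | omega

lemma Jcomp0 {n : ℕ} (x : G n) : (Jm n *ᵥ x) ⬝ᵥ E n 0 = -(x ⬝ᵥ E n 1) := by
  rw [Jskew, JP]

lemma Jcomp1 {n : ℕ} (x : G n) : (Jm n *ᵥ x) ⬝ᵥ E n 1 = x ⬝ᵥ E n 0 := by
  rw [Jskew, Jq]; simp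

lemma vmv_mulVec {n : ℕ} (a b x : G n) : vecMulVec a b *ᵥ x = (b ⬝ᵥ x) • a := by
  funext k
  simp only [mulVec, dotProduct, vecMulVec_apply, Pi.smul_apply, smul_eq_mul, Finset.sum_mul]
  exact Finset.sum_congr rfl (fun l _ => by ring)

lemma Sm_eq {n : ℕ} (μ : ℝ) (v₀ w₀ : G n) (D : Matrix (Fin (2*n)) (Fin (2*n)) ℝ) :
    symPart (Lm μ v₀ w₀ D)
      = μ • vecMulVec (E n 1) (E n 1) + vecMulVec (gam v₀ w₀) (E n 1)
        + vecMulVec (E n 1) (gam v₀ w₀) + symPart D := by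
  ext k l
  simp only [symPart, Lm, gam, Matrix.add_apply, Matrix.smul_apply, Matrix.transpose_apply,
    Matrix.of_apply, vecMulVec_apply, E, Pi.smul_apply, Pi.add_apply, smul_eq_mul]
  split_ifs <;> first | ring1 | (exfalso; omega)

lemma Am_eq {n : ℕ} (μ : ℝ) (v₀ w₀ : G n) (D : Matrix (Fin (2*n)) (Fin (2*n)) ℝ) :
    skewPart (Lm μ v₀ w₀ D)
      = vecMulVec (rho v₀ w₀) (E n 1) - vecMulVec (E n 1) (rho v₀ w₀) + skewPart D := by
  ext k l
  simp only [skewPart, Lm, rho, Matrix.add_apply, Matrix.smul_apply, Matrix.transpose_apply,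
    Matrix.of_apply, vecMulVec_apply, E, Pi.smul_apply, Pi.sub_apply, Matrix.sub_apply,
    smul_eq_mul]
  split_ifs <;> first | ring1 | (exfalso; omega)

lemma Sm_mulVec {n : ℕ} (μ : ℝ) (v₀ w₀ : G n) (D : Matrix (Fin (2*n)) (Fin (2*n)) ℝ) (x : G n) :
    symPart (Lm μ v₀ w₀ D) *ᵥ x
      = (μ * (E n 1 ⬝ᵥ x)) • E n 1 + (E n 1 ⬝ᵥ x) • gam v₀ w₀
        + (gam v₀ w₀ ⬝ᵥ x) • E n 1 + symPart D *ᵥ x := by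
  rw [Sm_eq]
  simp only [Matrix.add_mulVec, Matrix.smul_mulVec, vmv_mulVec, smul_smul]

lemma Am_mulVec {n : ℕ} (μ : ℝ) (v₀ w₀ : G n) (D : Matrix (Fin (2*n)) (Fin (2*n)) ℝ) (x : G n) :
    skewPart (Lm μ v₀ w₀ D) *ᵥ x
      = (E n 1 ⬝ᵥ x) • rho v₀ w₀ - (rho v₀ w₀ ⬝ᵥ x) • E n 1 + skewPart D *ᵥ x := by
  rw [Am_eq]
  simp only [Matrix.add_mulVec, Matrix.sub_mulVec, vmv_mulVec]

lemma symPart_symm {n : ℕ} (M : Matrix (Fin (2*n)) (Fin (2*n)) ℝ) :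
    (symPart M)ᵀ = symPart M := by
  simp [symPart, Matrix.transpose_add, Matrix.transpose_smul, add_comm]

lemma skewPart_skew {n : ℕ} (M : Matrix (Fin (2*n)) (Fin (2*n)) ℝ) :
    (skewPart M)ᵀ = -(skewPart M) := by
  simp [skewPart, Matrix.transpose_sub, Matrix.transpose_smul]
  rw [← smul_neg, neg_sub]

lemma symdot {n : ℕ} {M : Matrix (Fin (2*n)) (Fin (2*n)) ℝ} (h : Mᵀ = M) (x y : G n) :
    (M *ᵥ x) ⬝ᵥ y = (M *ᵥ y) ⬝ᵥ x := by
  rw [dotProduct_comm, dotProduct_mulVec, ← mulVec_transpose, h, dotProduct_comm]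

lemma skewdot {n : ℕ} {M : Matrix (Fin (2*n)) (Fin (2*n)) ℝ} (h : Mᵀ = -M) (x y : G n) :
    (M *ᵥ x) ⬝ᵥ y = -((M *ᵥ y) ⬝ᵥ x) := by
  rw [dotProduct_comm, dotProduct_mulVec, ← mulVec_transpose, h, neg_mulVec, neg_dotProduct,
    dotProduct_comm]

lemma DinA_symPart {n : ℕ} {D : Matrix (Fin (2*n)) (Fin (2*n)) ℝ} (hD : DinA D) :
    DinA (symPart D) := by
  intro k l h
  simp [symPart, hD k l h, hD l k (Or.symm h)]

lemma DinA_skewPart {n : ℕ} {D : Matrix (Fin (2*n)) (Fin (2*n)) ℝ} (hD : DinA D) :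
    DinA (skewPart D) := by
  intro k l h
  simp [skewPart, hD k l h, hD l k (Or.symm h)]

lemma DinA_mulVec_E {n : ℕ} {M : Matrix (Fin (2*n)) (Fin (2*n)) ℝ} (hM : DinA M)
    (j : ℕ) (hj : j < 2) : M *ᵥ E n j = 0 := by
  funext k
  simp only [mulVec, dotProduct, E, Pi.zero_apply]
  refine Finset.sum_eq_zero (fun l _ => ?_)
  by_cases h : (l : ℕ) = j
  · rw [hM k l (Or.inr (h ▸ hj))]; simp
  · simp [h]

lemma DinA_apply_lt2 {n : ℕ} {M : Matrix (Fin (2*n)) (Fin (2*n)) ℝ} (hM : DinA M)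
    (x : G n) (k : Fin (2*n)) (hk : (k : ℕ) < 2) : (M *ᵥ x) k = 0 := by
  simp only [mulVec, dotProduct]
  exact Finset.sum_eq_zero (fun l _ => by rw [hM k l (Or.inl hk)]; simp)

lemma inA_gam {n : ℕ} {v₀ w₀ : G n} (hv : inA v₀) (hw : inA w₀) : inA (gam v₀ w₀) := by
  intro i hi; simp [gam, hv i hi, hw i hi]

lemma inA_rho {n : ℕ} {v₀ w₀ : G n} (hv : inA v₀) (hw : inA w₀) : inA (rho v₀ w₀) := by
  intro i hi; simp [rho, hv i hi, hw i hi]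

lemma inA_dotE {n : ℕ} {x : G n} (hx : inA x) (j : ℕ) (hj : j < 2) : x ⬝ᵥ E n j = 0 := by
  simp only [dotProduct, E]
  refine Finset.sum_eq_zero (fun l _ => ?_)
  by_cases h : (l : ℕ) = j
  · rw [hx l (h ▸ hj)]; simp
  · simp [h]

lemma inA_Edot {n : ℕ} {x : G n} (hx : inA x) (j : ℕ) (hj : j < 2) : E n j ⬝ᵥ x = 0 := by
  rw [dotProduct_comm]; exact inA_dotE hx j hj

lemma trace_Lm {n : ℕ} (hn : 1 ≤ n) (μ : ℝ) {v₀ w₀ : G n}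
    (D : Matrix (Fin (2*n)) (Fin (2*n)) ℝ) (hv : inA v₀) (hw : inA w₀) :
    Matrix.trace (Lm μ v₀ w₀ D) = μ + Matrix.trace D := by
  have h1 : (1 : ℕ) < 2*n := by omega
  simp only [Matrix.trace, Matrix.diag, Lm, Matrix.of_apply]
  rw [Finset.sum_add_distrib, Finset.sum_add_distrib, Finset.sum_add_distrib]
  have e1 : ∀ k : Fin (2*n), ((k : ℕ) = 1 ∧ (k : ℕ) = 1) = (k = ⟨1, h1⟩) := by
    intro k; simp [Fin.ext_iff]
  have hμ : (∑ k : Fin (2*n), if (k : ℕ) = 1 ∧ (k : ℕ) = 1 then μ else 0) = μ := by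
    simp only [e1]
    rw [Finset.sum_ite_eq' Finset.univ (⟨1, h1⟩ : Fin (2*n)) (fun _ => μ)]
    simp
  have hv' : (∑ k : Fin (2*n), if (k : ℕ) = 1 then v₀ k else 0) = 0 :=
    Finset.sum_eq_zero (fun k _ => by
      by_cases h : (k : ℕ) = 1
      · rw [if_pos h, hv k (by omega)]
      · rw [if_neg h])
  have hw' : (∑ k : Fin (2*n), if (k : ℕ) = 1 then w₀ k else 0) = 0 :=
    Finset.sum_eq_zero (fun k _ => by
      by_cases h : (k : ℕ) = 1
      · rw [if_pos h, hw k (by omega)]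
      · rw [if_neg h])
  rw [hμ, hv', hw']
  ring

def nab {n : ℕ} (L : Matrix (Fin (2*n)) (Fin (2*n)) ℝ) (x y : G n) : G n :=
  (x ⬝ᵥ E n 0) • (skewPart L *ᵥ y) - (y ⬝ᵥ E n 0) • (symPart L *ᵥ x)
    + ((symPart L *ᵥ x) ⬝ᵥ y) • E n 0

lemma trans_dot {n : ℕ} (L : Matrix (Fin (2*n)) (Fin (2*n)) ℝ) (a b : G n) :
    (Lᵀ *ᵥ a) ⬝ᵥ b = (L *ᵥ b) ⬝ᵥ a := by
  rw [dotProduct_comm, dotProduct_mulVec, ← mulVec_transpose, Matrix.transpose_transpose,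
    dotProduct_comm]

lemma koszul_id {n : ℕ} (L : Matrix (Fin (2*n)) (Fin (2*n)) ℝ) (x y z : G n) :
    inn (br L x y) z - inn (br L y z) x + inn (br L z x) y = 2 * inn (nab L x y) z := by
  simp only [innDot, br, nab, symPart, skewPart, Matrix.smul_mulVec, Matrix.add_mulVec,
    Matrix.sub_mulVec, sub_dotProduct, add_dotProduct, smul_dotProduct, dotProduct_smul,
    smul_eq_mul, trans_dot]
  rw [dotProduct_comm (E n 0) z]
  ring

lemma nabla_unique {n : ℕ} {L : Matrix (Fin (2*n)) (Fin (2*n)) ℝ} {nabla : G n → G n → G n}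
    (hK : Koszul L nabla) : nabla = nab L := by
  funext x y
  funext j
  have h := hK x y (E n (j : ℕ))
  rw [koszul_id L x y (E n (j : ℕ))] at h
  have h1 : inn (nabla x y) (E n (j : ℕ)) = nabla x y j := by rw [innDot, dotE]
  have h2 : inn (nab L x y) (E n (j : ℕ)) = nab L x y j := by rw [innDot, dotE]
  rw [h1, h2] at h
  linarith

lemma PdotP {n : ℕ} (hn : 1 ≤ n) : (E n 0 : G n) ⬝ᵥ E n 0 = 1 := by
  have h0 : (0:ℕ) < 2*n := by omega
  rw [show ((E n 0 : G n) ⬝ᵥ E n 0) = (E n 0 : G n) ⟨0, h0⟩ from dotE _ ⟨0, h0⟩]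
  simp [E]

lemma qdotP {n : ℕ} (hn : 1 ≤ n) : (E n 1 : G n) ⬝ᵥ E n 0 = 0 := by
  have h0 : (0:ℕ) < 2*n := by omega
  rw [show ((E n 1 : G n) ⬝ᵥ E n 0) = (E n 1 : G n) ⟨0, h0⟩ from dotE _ ⟨0, h0⟩]
  simp [E]

lemma Pdotq {n : ℕ} (hn : 1 ≤ n) : (E n 0 : G n) ⬝ᵥ E n 1 = 0 := by
  have h1 : (1:ℕ) < 2*n := by omega
  rw [show ((E n 0 : G n) ⬝ᵥ E n 1) = (E n 0 : G n) ⟨1, h1⟩ from dotE _ ⟨1, h1⟩]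
  simp [E]

lemma dotJself {n : ℕ} (a : G n) : a ⬝ᵥ (Jm n *ᵥ a) = 0 := by
  have h := Jskew a a
  have h2 : (Jm n *ᵥ a) ⬝ᵥ a = a ⬝ᵥ (Jm n *ᵥ a) := dotProduct_comm _ _
  rw [h2] at h
  linarith

lemma dich {n : ℕ} (i : Fin (2*n)) : (E n (i:ℕ) : G n) ⬝ᵥ E n 0 = 0 ∨ (i:ℕ) = 0 := by
  by_cases h : (i : ℕ) = 0
  · exact Or.inr h
  · left
    rw [Edot (E n 0) i]
    simp [E, h]

def conn {n : ℕ} (Sm Am : Matrix (Fin (2*n)) (Fin (2*n)) ℝ) (x y : G n) : G n :=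
  (x ⬝ᵥ E n 0) • (Am *ᵥ y) - (y ⬝ᵥ E n 0) • (Sm *ᵥ x) + ((Sm *ᵥ x) ⬝ᵥ y) • E n 0

lemma nab_eq_conn {n : ℕ} (L : Matrix (Fin (2*n)) (Fin (2*n)) ℝ) :
    nab L = conn (symPart L) (skewPart L) := rfl
section
variable {n : ℕ} (Sm Am : Matrix (Fin (2*n)) (Fin (2*n)) ℝ)

lemma summand_eq (hn : 1 ≤ n)
    (hSP : Sm *ᵥ E n 0 = 0) (hAP : Am *ᵥ E n 0 = 0)
    (hSrow : ∀ y : G n, (Sm *ᵥ y) ⬝ᵥ E n 0 = 0)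
    (hArow : ∀ y : G n, (Am *ᵥ y) ⬝ᵥ E n 0 = 0)
    (x : G n) (i : Fin (2*n)) :
    conn Sm Am (E n (i:ℕ)) (covJ (conn Sm Am) (E n (i:ℕ)) x)
      - covJ (conn Sm Am) (E n (i:ℕ)) (conn Sm Am (E n (i:ℕ)) x)
      - covJ (conn Sm Am) (conn Sm Am (E n (i:ℕ)) (E n (i:ℕ))) x
    = (E n (i:ℕ) ⬝ᵥ E n 0) •
        (Am *ᵥ (Am *ᵥ (Jm n *ᵥ x)) - (2:ℝ) • (Am *ᵥ (Jm n *ᵥ (Am *ᵥ x)))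
          + Jm n *ᵥ (Am *ᵥ (Am *ᵥ x)))
      - ((Sm *ᵥ E n (i:ℕ)) ⬝ᵥ (Jm n *ᵥ x)) • (Sm *ᵥ E n (i:ℕ))
      + (2 * (x ⬝ᵥ E n 0)) • (((Sm *ᵥ E n (i:ℕ)) ⬝ᵥ E n 1) • (Sm *ᵥ E n (i:ℕ)))
      + (x ⬝ᵥ E n 1) • ((((Sm *ᵥ E n (i:ℕ)) ⬝ᵥ (Sm *ᵥ E n (i:ℕ)))) • E n 0)
      - (2:ℝ) • (((((Sm *ᵥ E n (i:ℕ)) ⬝ᵥ E n 1)) * ((Sm *ᵥ E n (i:ℕ)) ⬝ᵥ x)) • E n 0)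
      - Jm n *ᵥ (((Sm *ᵥ E n (i:ℕ)) ⬝ᵥ x) • (Sm *ᵥ E n (i:ℕ)))
      - (x ⬝ᵥ E n 0) • ((((Sm *ᵥ E n (i:ℕ)) ⬝ᵥ (Sm *ᵥ E n (i:ℕ)))) • E n 1)
      - ((Sm *ᵥ E n (i:ℕ)) ⬝ᵥ E n (i:ℕ)) • (Am *ᵥ (Jm n *ᵥ x) - Jm n *ᵥ (Am *ᵥ x)) := by
  rcases dich i with h | h
  · simp only [covJ, conn, Matrix.mulVec_add, Matrix.mulVec_sub, Matrix.mulVec_smul,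
      Matrix.mulVec_zero, Matrix.mulVec_neg, add_dotProduct, sub_dotProduct, smul_dotProduct,
      neg_dotProduct, zero_dotProduct, dotProduct_add, dotProduct_sub, dotProduct_smul,
      dotProduct_neg, dotProduct_zero, smul_eq_mul, h, hSP, hAP, hSrow, hArow, Jcomp0, Jcomp1,
      JP, Jq, JJ, dotJself, PdotP hn, qdotP hn, Pdotq hn, smul_zero, zero_smul, zero_mul,
      mul_zero, neg_zero, add_zero, zero_add, sub_zero, zero_sub, neg_neg]
    module
  · simp only [h, Nat.cast_zero]
    simp only [covJ, conn, Matrix.mulVec_add, Matrix.mulVec_sub, Matrix.mulVec_smul,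
      Matrix.mulVec_zero, Matrix.mulVec_neg, add_dotProduct, sub_dotProduct, smul_dotProduct,
      neg_dotProduct, zero_dotProduct, dotProduct_add, dotProduct_sub, dotProduct_smul,
      dotProduct_neg, dotProduct_zero, smul_eq_mul, hSP, hAP, hSrow, hArow, Jcomp0, Jcomp1,
      JP, Jq, JJ, dotJself, PdotP hn, qdotP hn, Pdotq hn, smul_zero, zero_smul, zero_mul,
      mul_zero, neg_zero, add_zero, zero_add, sub_zero, zero_sub, neg_neg]
    module

end
lemma mulVecE' {n : ℕ} (M : Matrix (Fin (2*n)) (Fin (2*n)) ℝ) (i : Fin (2*n)) :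
    (M *ᵥ E n (i:ℕ)) = fun k => M k i := funext (mulVecE M i)

lemma SL_B {n : ℕ} (Sm : Matrix (Fin (2*n)) (Fin (2*n)) ℝ) (a : G n) :
    ∑ i : Fin (2*n), ((Sm *ᵥ E n (i:ℕ)) ⬝ᵥ a) • (Sm *ᵥ E n (i:ℕ))
      = Sm *ᵥ (Smᵀ *ᵥ a) := by
  funext k
  simp only [Finset.sum_apply, Pi.smul_apply, smul_eq_mul, mulVecE']
  simp only [dotProduct, mulVec, Matrix.transpose_apply]
  exact Finset.sum_congr rfl (fun i _ => by ring)

lemma SL_dot {n : ℕ} (Sm : Matrix (Fin (2*n)) (Fin (2*n)) ℝ) (a b : G n) :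
    ∑ i : Fin (2*n), ((Sm *ᵥ E n (i:ℕ)) ⬝ᵥ a) * ((Sm *ᵥ E n (i:ℕ)) ⬝ᵥ b)
      = (Sm *ᵥ (Smᵀ *ᵥ a)) ⬝ᵥ b := by
  simp only [mulVecE']
  simp only [dotProduct, mulVec, Matrix.transpose_apply]
  calc ∑ i : Fin (2*n), (∑ l, (fun k => Sm k i) l * a l) * (∑ k, (fun k => Sm k i) k * b k)
      = ∑ i : Fin (2*n), ∑ k, ((∑ l, Sm l i * a l) * Sm k i * b k) := by
        refine Finset.sum_congr rfl (fun i _ => ?_)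
        rw [Finset.mul_sum]
        exact Finset.sum_congr rfl (fun k _ => by ring)
    _ = ∑ k : Fin (2*n), ∑ i, ((∑ l, Sm l i * a l) * Sm k i * b k) := Finset.sum_comm
    _ = ∑ k : Fin (2*n), (∑ i, Sm k i * (∑ l, Sm l i * a l)) * b k := by
        refine Finset.sum_congr rfl (fun k _ => ?_)
        rw [Finset.sum_mul]
        exact Finset.sum_congr rfl (fun i _ => by ring)

lemma SL_tr {n : ℕ} (Sm : Matrix (Fin (2*n)) (Fin (2*n)) ℝ) :
    ∑ i : Fin (2*n), (Sm *ᵥ E n (i:ℕ)) ⬝ᵥ E n (i:ℕ) = Matrix.trace Sm := by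
  simp only [Matrix.trace, Matrix.diag]
  refine Finset.sum_congr rfl (fun i _ => ?_)
  rw [dotE, mulVecE]

lemma SL_delta {n : ℕ} (hn : 1 ≤ n) :
    ∑ i : Fin (2*n), ((E n (i:ℕ) : G n) ⬝ᵥ E n 0) = 1 := by
  have h0 : (0:ℕ) < 2*n := by omega
  have h : ∀ i : Fin (2*n), ((E n (i:ℕ) : G n) ⬝ᵥ E n 0) = if i = ⟨0, h0⟩ then 1 else 0 := by
    intro i
    rw [Edot (E n 0) i]
    simp [E, Fin.ext_iff]
  simp [h]

lemma SL_J {n : ℕ} (M : Matrix (Fin (2*n)) (Fin (2*n)) ℝ) (c : Fin (2*n) → ℝ)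
    (v : Fin (2*n) → G n) :
    ∑ i : Fin (2*n), c i • (M *ᵥ v i) = M *ᵥ (∑ i : Fin (2*n), c i • v i) := by
  rw [show (∑ i : Fin (2*n), c i • (M *ᵥ v i)) = ∑ i : Fin (2*n), M *ᵥ (c i • v i) from
    Finset.sum_congr rfl (fun i _ => (Matrix.mulVec_smul M (c i) (v i)).symm)]
  exact (map_sum M.mulVecLin (fun i => c i • v i) Finset.univ).symm
lemma mulVec_sumg {n : ℕ} (M : Matrix (Fin (2*n)) (Fin (2*n)) ℝ) (g : Fin (2*n) → G n) :
    ∑ i : Fin (2*n), M *ᵥ (g i) = M *ᵥ (∑ i : Fin (2*n), g i) := by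
  have h := map_sum M.mulVecLin g Finset.univ
  simpa only [Matrix.mulVecLin_apply] using h.symm

lemma roughLap_eq {n : ℕ} (hn : 1 ≤ n) (Sm Am : Matrix (Fin (2*n)) (Fin (2*n)) ℝ)
    (hSymm : Smᵀ = Sm) (htr : Matrix.trace Sm = 0)
    (hSP : Sm *ᵥ E n 0 = 0) (hAP : Am *ᵥ E n 0 = 0)
    (hSrow : ∀ y : G n, (Sm *ᵥ y) ⬝ᵥ E n 0 = 0)
    (hArow : ∀ y : G n, (Am *ᵥ y) ⬝ᵥ E n 0 = 0)
    (x : G n) :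
    roughLap (conn Sm Am) x
    = (Am *ᵥ (Am *ᵥ (Jm n *ᵥ x)) - (2:ℝ) • (Am *ᵥ (Jm n *ᵥ (Am *ᵥ x)))
        + Jm n *ᵥ (Am *ᵥ (Am *ᵥ x)))
      - Sm *ᵥ (Sm *ᵥ (Jm n *ᵥ x))
      + (2 * (x ⬝ᵥ E n 0)) • (Sm *ᵥ (Sm *ᵥ E n 1))
      + (x ⬝ᵥ E n 1) • ((∑ i : Fin (2*n), (Sm *ᵥ E n (i:ℕ)) ⬝ᵥ (Sm *ᵥ E n (i:ℕ))) • E n 0)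
      - (2:ℝ) • (((Sm *ᵥ (Sm *ᵥ E n 1)) ⬝ᵥ x) • E n 0)
      - Jm n *ᵥ (Sm *ᵥ (Sm *ᵥ x))
      - (x ⬝ᵥ E n 0) • ((∑ i : Fin (2*n), (Sm *ᵥ E n (i:ℕ)) ⬝ᵥ (Sm *ᵥ E n (i:ℕ))) • E n 1) := by
  rw [roughLap]
  rw [Finset.sum_congr rfl (fun i _ => summand_eq Sm Am hn hSP hAP hSrow hArow x i)]
  simp only [Finset.sum_sub_distrib, Finset.sum_add_distrib]
  rw [← Finset.sum_smul, SL_delta hn, one_smul]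
  rw [SL_B Sm (Jm n *ᵥ x), hSymm]
  rw [← Finset.smul_sum, SL_B Sm (E n 1), hSymm]
  rw [← Finset.smul_sum, ← Finset.sum_smul]
  rw [← Finset.smul_sum, ← Finset.sum_smul, SL_dot Sm (E n 1) x, hSymm]
  rw [mulVec_sumg, SL_B Sm x, hSymm]
  rw [← Finset.smul_sum, ← Finset.sum_smul]
  rw [← Finset.sum_smul, SL_tr, htr, zero_smul, sub_zero]
lemma harmonic_iff_G {n : ℕ} (hn : 1 ≤ n) (Sm Am : Matrix (Fin (2*n)) (Fin (2*n)) ℝ)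
    (hSymm : Smᵀ = Sm) (htr : Matrix.trace Sm = 0)
    (hSP : Sm *ᵥ E n 0 = 0) (hAP : Am *ᵥ E n 0 = 0)
    (hSrow : ∀ y : G n, (Sm *ᵥ y) ⬝ᵥ E n 0 = 0)
    (hArow : ∀ y : G n, (Am *ᵥ y) ⬝ᵥ E n 0 = 0) :
    Harmonic (conn Sm Am) ↔ ∀ x : G n,
      Am *ᵥ (Jm n *ᵥ (Am *ᵥ (Jm n *ᵥ x))) - Jm n *ᵥ (Am *ᵥ (Jm n *ᵥ (Am *ᵥ x)))
        + (x ⬝ᵥ E n 0) • (Jm n *ᵥ (Sm *ᵥ (Sm *ᵥ E n 1)))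
        + (x ⬝ᵥ E n 1) • (Sm *ᵥ (Sm *ᵥ E n 1))
        + ((Sm *ᵥ (Sm *ᵥ E n 1)) ⬝ᵥ (Jm n *ᵥ x)) • E n 0
        - ((Sm *ᵥ (Sm *ᵥ E n 1)) ⬝ᵥ x) • E n 1 = 0 := by
  have key : ∀ x : G n,
      Jm n *ᵥ (roughLap (conn Sm Am) x) - roughLap (conn Sm Am) (Jm n *ᵥ x)
      = (2:ℝ) • (Am *ᵥ (Jm n *ᵥ (Am *ᵥ (Jm n *ᵥ x))) - Jm n *ᵥ (Am *ᵥ (Jm n *ᵥ (Am *ᵥ x)))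
        + (x ⬝ᵥ E n 0) • (Jm n *ᵥ (Sm *ᵥ (Sm *ᵥ E n 1)))
        + (x ⬝ᵥ E n 1) • (Sm *ᵥ (Sm *ᵥ E n 1))
        + ((Sm *ᵥ (Sm *ᵥ E n 1)) ⬝ᵥ (Jm n *ᵥ x)) • E n 0
        - ((Sm *ᵥ (Sm *ᵥ E n 1)) ⬝ᵥ x) • E n 1) := by
    intro x
    rw [roughLap_eq hn Sm Am hSymm htr hSP hAP hSrow hArow x,
      roughLap_eq hn Sm Am hSymm htr hSP hAP hSrow hArow (Jm n *ᵥ x)]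
    simp only [Matrix.mulVec_add, Matrix.mulVec_sub, Matrix.mulVec_smul, Matrix.mulVec_neg,
      JJ, JP, Jq, Jcomp0, Jcomp1, dotProduct_neg, dotProduct_smul, neg_dotProduct,
      dotProduct_add, dotProduct_sub, smul_eq_mul, smul_neg, neg_neg, mulVec_zero,
      dotProduct_zero, zero_dotProduct]
    module
  unfold Harmonic
  constructor
  · intro h x
    have h2 := key x
    rw [h x, sub_self] at h2
    have := h2.symm
    rcases smul_eq_zero.mp this with h3 | h3
    · norm_num at h3
    · exact h3
  · intro h x
    have h2 := key x
    rw [h x, smul_zero, sub_eq_zero] at h2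
    exact h2
lemma qdotq {n : ℕ} (hn : 1 ≤ n) : (E n 1 : G n) ⬝ᵥ E n 1 = 1 := by
  have h1 : (1:ℕ) < 2*n := by omega
  rw [show ((E n 1 : G n) ⬝ᵥ E n 1) = (E n 1 : G n) ⟨1, h1⟩ from dotE _ ⟨1, h1⟩]
  simp [E]

lemma dotE0 {n : ℕ} (h0 : (0:ℕ) < 2*n) (a : G n) : a ⬝ᵥ E n 0 = a ⟨0, h0⟩ :=
  dotE a ⟨0, h0⟩

lemma Edot0 {n : ℕ} (h0 : (0:ℕ) < 2*n) (a : G n) : (E n 0 : G n) ⬝ᵥ a = a ⟨0, h0⟩ :=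
  Edot a ⟨0, h0⟩

lemma dotE1 {n : ℕ} (h1 : (1:ℕ) < 2*n) (a : G n) : a ⬝ᵥ E n 1 = a ⟨1, h1⟩ :=
  dotE a ⟨1, h1⟩

lemma Edot1 {n : ℕ} (h1 : (1:ℕ) < 2*n) (a : G n) : (E n 1 : G n) ⬝ᵥ a = a ⟨1, h1⟩ :=
  Edot a ⟨1, h1⟩

lemma capp0 {n : ℕ} (h0 : (0:ℕ) < 2*n) (h1 : (1:ℕ) < 2*n) (z : G n) :
    (Jm n *ᵥ z) ⟨0, h0⟩ = -(z ⟨1, h1⟩) := by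
  rw [Jmul]
  have hf : flipI (⟨0, h0⟩ : Fin (2*n)) = ⟨1, h1⟩ := by
    apply Fin.ext; simp [flipI]
  simp [hf]

lemma capp1 {n : ℕ} (h0 : (0:ℕ) < 2*n) (h1 : (1:ℕ) < 2*n) (z : G n) :
    (Jm n *ᵥ z) ⟨1, h1⟩ = z ⟨0, h0⟩ := by
  rw [Jmul]
  have hf : flipI (⟨1, h1⟩ : Fin (2*n)) = ⟨0, h0⟩ := by
    apply Fin.ext; simp [flipI]
  simp [hf]

lemma Eval {n : ℕ} (j : ℕ) (k : Fin (2*n)) : (E n j : G n) k = if (k:ℕ) = j then 1 else 0 := rfl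

lemma skewselfdot {n : ℕ} {M : Matrix (Fin (2*n)) (Fin (2*n)) ℝ} (h : Mᵀ = -M) (a : G n) :
    a ⬝ᵥ (M *ᵥ a) = 0 := by
  have h2 := skewdot h a a
  have h3 : (M *ᵥ a) ⬝ᵥ a = a ⬝ᵥ (M *ᵥ a) := dotProduct_comm _ _
  rw [h3] at h2
  linarith

lemma JmoveR {n : ℕ} (a b : G n) : a ⬝ᵥ (Jm n *ᵥ b) = -((Jm n *ᵥ a) ⬝ᵥ b) := by
  rw [Jskew]; ring

lemma skewmoveR {n : ℕ} {M : Matrix (Fin (2*n)) (Fin (2*n)) ℝ} (h : Mᵀ = -M) (a b : G n) :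
    (M *ᵥ a) ⬝ᵥ b = -(a ⬝ᵥ (M *ᵥ b)) := by
  rw [skewdot h, dotProduct_comm]

lemma symmoveR {n : ℕ} {M : Matrix (Fin (2*n)) (Fin (2*n)) ℝ} (h : Mᵀ = M) (a b : G n) :
    (M *ᵥ a) ⬝ᵥ b = a ⬝ᵥ (M *ᵥ b) := by
  rw [symdot h, dotProduct_comm]
lemma Bq_eq {n : ℕ} (hn : 1 ≤ n) (μ : ℝ) (v₀ w₀ : G n) (hv : inA v₀) (hw : inA w₀)
    (D : Matrix (Fin (2*n)) (Fin (2*n)) ℝ) (hD : DinA D) :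
    symPart (Lm μ v₀ w₀ D) *ᵥ (symPart (Lm μ v₀ w₀ D) *ᵥ E n 1)
      = (μ*μ + gam v₀ w₀ ⬝ᵥ gam v₀ w₀) • E n 1
        + (μ • gam v₀ w₀ + symPart D *ᵥ gam v₀ w₀) := by
  have hq : symPart (Lm μ v₀ w₀ D) *ᵥ E n 1 = μ • E n 1 + gam v₀ w₀ := by
    rw [Sm_mulVec]
    rw [qdotq hn, inA_dotE (inA_gam hv hw) 1 (by omega),
      DinA_mulVec_E (DinA_symPart hD) 1 (by omega)]
    module
  rw [hq, Matrix.mulVec_add, Matrix.mulVec_smul, hq, Sm_mulVec]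
  rw [inA_Edot (inA_gam hv hw) 1 (by omega)]
  module
lemma key2 {n : ℕ} (hn : 1 ≤ n) (μ : ℝ) (v₀ w₀ : G n) (hv : inA v₀) (hw : inA w₀)
    (D : Matrix (Fin (2*n)) (Fin (2*n)) ℝ) (hD : DinA D) (x : G n) :
    skewPart (Lm μ v₀ w₀ D) *ᵥ (Jm n *ᵥ (skewPart (Lm μ v₀ w₀ D) *ᵥ (Jm n *ᵥ x)))
      - Jm n *ᵥ (skewPart (Lm μ v₀ w₀ D) *ᵥ (Jm n *ᵥ (skewPart (Lm μ v₀ w₀ D) *ᵥ x)))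
      + (x ⬝ᵥ E n 0) • (Jm n *ᵥ (symPart (Lm μ v₀ w₀ D) *ᵥ (symPart (Lm μ v₀ w₀ D) *ᵥ E n 1)))
      + (x ⬝ᵥ E n 1) • (symPart (Lm μ v₀ w₀ D) *ᵥ (symPart (Lm μ v₀ w₀ D) *ᵥ E n 1))
      + ((symPart (Lm μ v₀ w₀ D) *ᵥ (symPart (Lm μ v₀ w₀ D) *ᵥ E n 1)) ⬝ᵥ (Jm n *ᵥ x)) • E n 0
      - ((symPart (Lm μ v₀ w₀ D) *ᵥ (symPart (Lm μ v₀ w₀ D) *ᵥ E n 1)) ⬝ᵥ x) • E n 1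
    = (x ⬝ᵥ E n 0) • (Jm n *ᵥ (μ • gam v₀ w₀ + symPart D *ᵥ gam v₀ w₀
          - Jm n *ᵥ (skewPart D *ᵥ (Jm n *ᵥ rho v₀ w₀))))
      + (x ⬝ᵥ E n 1) • (μ • gam v₀ w₀ + symPart D *ᵥ gam v₀ w₀
          - Jm n *ᵥ (skewPart D *ᵥ (Jm n *ᵥ rho v₀ w₀)))
      - ((Jm n *ᵥ (μ • gam v₀ w₀ + symPart D *ᵥ gam v₀ w₀
          - Jm n *ᵥ (skewPart D *ᵥ (Jm n *ᵥ rho v₀ w₀)))) ⬝ᵥ x) • E n 0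
      - ((μ • gam v₀ w₀ + symPart D *ᵥ gam v₀ w₀
          - Jm n *ᵥ (skewPart D *ᵥ (Jm n *ᵥ rho v₀ w₀))) ⬝ᵥ x) • E n 1
      + (skewPart D *ᵥ (Jm n *ᵥ (skewPart D *ᵥ (Jm n *ᵥ x)))
          - Jm n *ᵥ (skewPart D *ᵥ (Jm n *ᵥ (skewPart D *ᵥ x)))) := by
  have h0 : (0:ℕ) < 2*n := by omega
  have h1 : (1:ℕ) < 2*n := by omega
  have hDa := DinA_skewPart hD
  have hDs := DinA_symPart hD
  have hDa0 : ∀ z : G n, (skewPart D *ᵥ z) ⟨0, h0⟩ = 0 :=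
    fun z => DinA_apply_lt2 hDa z ⟨0, h0⟩ (by norm_num)
  have hDa1 : ∀ z : G n, (skewPart D *ᵥ z) ⟨1, h1⟩ = 0 :=
    fun z => DinA_apply_lt2 hDa z ⟨1, h1⟩ (by norm_num)
  have hDs0 : ∀ z : G n, (symPart D *ᵥ z) ⟨0, h0⟩ = 0 :=
    fun z => DinA_apply_lt2 hDs z ⟨0, h0⟩ (by norm_num)
  have hDs1 : ∀ z : G n, (symPart D *ᵥ z) ⟨1, h1⟩ = 0 :=
    fun z => DinA_apply_lt2 hDs z ⟨1, h1⟩ (by norm_num)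
  have hDaE0 : skewPart D *ᵥ E n 0 = 0 := DinA_mulVec_E hDa 0 (by norm_num)
  have hDaE1 : skewPart D *ᵥ E n 1 = 0 := DinA_mulVec_E hDa 1 (by norm_num)
  have hDsE0 : symPart D *ᵥ E n 0 = 0 := DinA_mulVec_E hDs 0 (by norm_num)
  have hDsE1 : symPart D *ᵥ E n 1 = 0 := DinA_mulVec_E hDs 1 (by norm_num)
  have hγ := inA_gam hv hw
  have hρ := inA_rho hv hw
  have hγ0 : gam v₀ w₀ ⟨0, h0⟩ = 0 := hγ ⟨0, h0⟩ (by norm_num)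
  have hγ1 : gam v₀ w₀ ⟨1, h1⟩ = 0 := hγ ⟨1, h1⟩ (by norm_num)
  have hρ0 : rho v₀ w₀ ⟨0, h0⟩ = 0 := hρ ⟨0, h0⟩ (by norm_num)
  have hρ1 : rho v₀ w₀ ⟨1, h1⟩ = 0 := hρ ⟨1, h1⟩ (by norm_num)
  have hE00 : (E n 0 : G n) ⟨0, h0⟩ = 1 := by simp [E]
  have hE01 : (E n 0 : G n) ⟨1, h1⟩ = 0 := by simp [E]
  have hE10 : (E n 1 : G n) ⟨0, h0⟩ = 0 := by simp [E]
  have hE11 : (E n 1 : G n) ⟨1, h1⟩ = 1 := by simp [E]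
  rw [Bq_eq hn μ v₀ w₀ hv hw D hD]
  simp only [Am_mulVec, Matrix.mulVec_add, Matrix.mulVec_sub, Matrix.mulVec_smul,
    Matrix.mulVec_neg, Matrix.mulVec_zero, JJ, JP, Jq,
    add_dotProduct, sub_dotProduct, smul_dotProduct, neg_dotProduct, zero_dotProduct,
    dotProduct_add, dotProduct_sub, dotProduct_smul, dotProduct_neg, dotProduct_zero,
    Jskew, skewmoveR (skewPart_skew D), symmoveR (symPart_symm D),
    dotE0 h0, dotE1 h1, Edot0 h0, Edot1 h1, capp0 h0 h1, capp1 h0 h1,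
    Pi.add_apply, Pi.sub_apply, Pi.smul_apply, Pi.neg_apply, Pi.zero_apply,
    hDa0, hDa1, hDs0, hDs1, hDaE0, hDaE1, hDsE0, hDsE1, hγ0, hγ1, hρ0, hρ1,
    hE00, hE01, hE10, hE11, dotJself, skewselfdot (skewPart_skew D),
    smul_eq_mul, smul_zero, zero_smul, mul_zero, zero_mul, add_zero, zero_add, sub_zero,
    zero_sub, neg_zero, neg_neg, mul_one, one_mul]
  module

/-- Corollary 3.4: if `g` is unimodular (`μ + Tr D = 0`), then `J` is
harmonic iff (i) `μγ + D_s γ − J' D_a J' ρ = 0` and (ii) `D_a J' D_a J' = J' D_a J' D_a`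
as endomorphisms of `a`. -/
theorem statement2 (n : ℕ) (hn : 2 ≤ n) (μ : ℝ) (v₀ w₀ : G n) (hv : inA v₀) (hw : inA w₀)
    (D : Matrix (Fin (2*n)) (Fin (2*n)) ℝ) (hD : DinA D)
    (huni : μ + Matrix.trace D = 0)
    (nabla : G n → G n → G n) (hK : Koszul (Lm μ v₀ w₀ D) nabla) :
    Harmonic nabla ↔
      ((μ • gam v₀ w₀ + (symPart D).mulVec (gam v₀ w₀)
          - (Jm n).mulVec ((skewPart D).mulVec ((Jm n).mulVec (rho v₀ w₀))) = 0)
        ∧ (∀ x : G n, inA x →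
            (skewPart D * Jm n * skewPart D * Jm n).mulVec x
              = (Jm n * skewPart D * Jm n * skewPart D).mulVec x)) := by
  have hn1 : 1 ≤ n := by omega
  have h0 : (0:ℕ) < 2*n := by omega
  have h1 : (1:ℕ) < 2*n := by omega
  -- basic facts
  have hDa := DinA_skewPart hD
  have hγ := inA_gam hv hw
  have hρ := inA_rho hv hw
  have hDaE0 : skewPart D *ᵥ E n 0 = 0 := DinA_mulVec_E hDa 0 (by norm_num)
  have hDaE1 : skewPart D *ᵥ E n 1 = 0 := DinA_mulVec_E hDa 1 (by norm_num)
  have hSymm : (symPart (Lm μ v₀ w₀ D))ᵀ = symPart (Lm μ v₀ w₀ D) := symPart_symm _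
  have htr : Matrix.trace (symPart (Lm μ v₀ w₀ D)) = 0 := by
    have h2 : Matrix.trace (symPart (Lm μ v₀ w₀ D)) = Matrix.trace (Lm μ v₀ w₀ D) := by
      simp [symPart, Matrix.trace_smul, Matrix.trace_add, Matrix.trace_transpose]
      ring
    rw [h2, trace_Lm hn1 μ D hv hw]
    exact huni
  have hSP : symPart (Lm μ v₀ w₀ D) *ᵥ E n 0 = 0 := by
    rw [Sm_mulVec, qdotP hn1, inA_dotE hγ 0 (by norm_num),
      DinA_mulVec_E (DinA_symPart hD) 0 (by norm_num)]
    module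
  have hAP : skewPart (Lm μ v₀ w₀ D) *ᵥ E n 0 = 0 := by
    rw [Am_mulVec, qdotP hn1, inA_dotE hρ 0 (by norm_num), hDaE0]
    module
  have hSrow : ∀ y : G n, (symPart (Lm μ v₀ w₀ D) *ᵥ y) ⬝ᵥ E n 0 = 0 := by
    intro y
    rw [symdot hSymm, hSP, zero_dotProduct]
  have hArow : ∀ y : G n, (skewPart (Lm μ v₀ w₀ D) *ᵥ y) ⬝ᵥ E n 0 = 0 := by
    intro y
    rw [skewdot (skewPart_skew _), hAP, zero_dotProduct, neg_zero]
  have hnabla : nabla = conn (symPart (Lm μ v₀ w₀ D)) (skewPart (Lm μ v₀ w₀ D)) :=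
    nabla_unique hK
  rw [hnabla, harmonic_iff_G hn1 _ _ hSymm htr hSP hAP hSrow hArow]
  simp only [key2 hn1 μ v₀ w₀ hv hw D hD]
  have hE00 : (E n 0 : G n) ⟨0, h0⟩ = 1 := by simp [E]
  have hE01 : (E n 0 : G n) ⟨1, h1⟩ = 0 := by simp [E]
  have hE10 : (E n 1 : G n) ⟨0, h0⟩ = 0 := by simp [E]
  have hE11 : (E n 1 : G n) ⟨1, h1⟩ = 1 := by simp [E]
  have hDa0 : ∀ z : G n, (skewPart D *ᵥ z) ⟨0, h0⟩ = 0 :=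
    fun z => DinA_apply_lt2 hDa z ⟨0, h0⟩ (by norm_num)
  have hDa1 : ∀ z : G n, (skewPart D *ᵥ z) ⟨1, h1⟩ = 0 :=
    fun z => DinA_apply_lt2 hDa z ⟨1, h1⟩ (by norm_num)
  set c : G n := μ • gam v₀ w₀ + symPart D *ᵥ gam v₀ w₀
      - Jm n *ᵥ (skewPart D *ᵥ (Jm n *ᵥ rho v₀ w₀)) with hcdef
  have hc0 : c ⟨0, h0⟩ = 0 := by
    simp only [hcdef, Pi.add_apply, Pi.sub_apply, Pi.smul_apply, smul_eq_mul,
      hγ ⟨0,h0⟩ (by norm_num), capp0 h0 h1, hDa1,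
      DinA_apply_lt2 (DinA_symPart hD) _ ⟨0,h0⟩ (by norm_num)]
    ring
  have hc1 : c ⟨1, h1⟩ = 0 := by
    simp only [hcdef, Pi.add_apply, Pi.sub_apply, Pi.smul_apply, smul_eq_mul,
      hγ ⟨1,h1⟩ (by norm_num), capp1 h0 h1, hDa0,
      DinA_apply_lt2 (DinA_symPart hD) _ ⟨1,h1⟩ (by norm_num)]
    ring
  constructor
  · intro h
    have hceq : c = 0 := by
      have h2 := h (E n 1)
      simp only [dotE0 h0, dotE1 h1, hE10, hE11, capp0 h0 h1, capp1 h0 h1, hc0, hc1,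
        Jq, JP, hDaE0, hDaE1, Matrix.mulVec_zero, Matrix.mulVec_neg, neg_zero,
        smul_zero, zero_smul, one_smul, add_zero, zero_add, sub_zero, smul_eq_mul] at h2
      simpa using h2
    refine ⟨hceq, fun x hx => ?_⟩
    have h2 := h x
    rw [hceq] at h2
    simp only [Matrix.mulVec_zero, smul_zero, zero_smul, zero_dotProduct, dotProduct_zero,
      add_zero, zero_add, sub_zero, zero_sub, neg_zero] at h2
    simp only [← Matrix.mulVec_mulVec]
    have h3 := sub_eq_zero.mp h2
    simpa using h3
  · rintro ⟨hceq, hW⟩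
    have hWall : ∀ z : G n,
        skewPart D *ᵥ (Jm n *ᵥ (skewPart D *ᵥ (Jm n *ᵥ z)))
          = Jm n *ᵥ (skewPart D *ᵥ (Jm n *ᵥ (skewPart D *ᵥ z))) := by
      intro z
      have hy : inA (z - z ⟨0,h0⟩ • E n 0 - z ⟨1,h1⟩ • E n 1) := by
        intro i hi
        have hi2 : (i:ℕ) = 0 ∨ (i:ℕ) = 1 := by omega
        rcases hi2 with hi2 | hi2
        · have : i = ⟨0, h0⟩ := Fin.ext hi2
          rw [this]
          simp only [Pi.sub_apply, Pi.smul_apply, smul_eq_mul, hE00, hE10]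
          ring
        · have : i = ⟨1, h1⟩ := Fin.ext hi2
          rw [this]
          simp only [Pi.sub_apply, Pi.smul_apply, smul_eq_mul, hE01, hE11]
          ring
      have h3 := hW _ hy
      simp only [← Matrix.mulVec_mulVec] at h3
      simp only [Matrix.mulVec_sub, Matrix.mulVec_smul, JP, Jq, hDaE0, hDaE1,
        Matrix.mulVec_neg, Matrix.mulVec_zero, smul_zero, neg_zero, sub_zero,
        smul_neg, neg_neg] at h3
      exact h3
    intro x
    rw [hceq]
    rw [hWall x]
    simp
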